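/- arXiv:1805.05630 — 2 statements merged into one kernel-verified Lean document; each statement's English description precedes it below -/
import Mathlib

section
/- As α → +∞, I(α) = √(4π/α)(1 + O(α^{-1})); that is, there exist constants C > 0 and α_0 such that | I(α)·√(α/(4π)) − 1 | ≤ C/α for all α ≥ α_0. -/
/-!
Statement 9: As α → +∞, I(α) = √(4π/α)(1 + O(α⁻¹)), i.e. there exist C > 0 and α₀
such that |I(α)·√(α/(4π)) − 1| ≤ C/α for all α ≥ α₀, where
I(α) = ∫_{-∞}^{∞} e^{-(α/4)t² + it/2} (1 + it)^{-1/2} dt (principal branch).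
-/

noncomputable section

/-- `I(α) = ∫ℝ e^{-(α/4)t² + it/2} (1+it)^{-1/2} dt`, principal branch of the square root. -/
def Iint (α : ℝ) : ℂ :=
  ∫ t : ℝ, Complex.exp (-(α / 4) * t ^ 2 + Complex.I * t / 2) *
    (1 + Complex.I * t) ^ (-(1 / 2 : ℂ))

open Complex MeasureTheory

/-- The non-Gaussian factor in the integrand. -/
def fF (t : ℝ) : ℂ := Complex.exp (Complex.I * t / 2) * (1 + Complex.I * t) ^ (-(1/2 : ℂ))

lemma one_add_ne (s : ℝ) : (1 + Complex.I * s) ≠ 0 := by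
  intro h
  have := congrArg Complex.re h
  simp at this

lemma abs_one_add (s : ℝ) : 1 ≤ ‖(1 + Complex.I * s)‖ := by
  calc (1:ℝ) = |(1 + Complex.I * s).re| := by simp
  _ ≤ ‖(1 + Complex.I * s)‖ := Complex.abs_re_le_norm _

lemma abs_cpow_le (s : ℝ) (r : ℝ) (hr : r ≤ 0) :
    ‖(1 + Complex.I * s) ^ (r : ℂ)‖ ≤ 1 := by
  rw [Complex.norm_cpow_of_ne_zero (one_add_ne s)]
  simp only [Complex.ofReal_re, Complex.ofReal_im, mul_zero, Real.exp_zero, div_one]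
  exact Real.rpow_le_one_of_one_le_of_nonpos (abs_one_add s) hr

lemma fF_hasDerivAt (s : ℝ) :
    HasDerivAt fF (Complex.I/2 * Complex.exp (Complex.I * s / 2) * (Complex.I * s) *
      (1 + Complex.I * s) ^ (-(3/2 : ℂ))) s := by
  have h1 : HasDerivAt (fun z : ℂ => Complex.exp (Complex.I * z / 2))
      (Complex.I/2 * Complex.exp (Complex.I * s / 2)) (s : ℂ) := by
    have h0 : HasDerivAt (fun z : ℂ => Complex.I * z / 2) (Complex.I/2) (s : ℂ) := by
      simpa [mul_comm, mul_div_assoc] using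
        ((hasDerivAt_id (s : ℂ)).const_mul (Complex.I/2))
    simpa [mul_comm] using h0.cexp
  have h2 : HasDerivAt (fun z : ℂ => (1 + Complex.I * z) ^ (-(1/2 : ℂ)))
      ((-(1/2 : ℂ)) * (1 + Complex.I * s) ^ ((-(1/2 : ℂ)) - 1) * Complex.I) (s : ℂ) := by
    have h0 : HasDerivAt (fun z : ℂ => 1 + Complex.I * z) Complex.I (s : ℂ) := by
      simpa using ((hasDerivAt_id (s : ℂ)).const_mul Complex.I).const_add 1
    exact h0.cpow_const (by left; simp)
  have h3 := (h1.mul h2).comp_ofReal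
  have key : (1 + Complex.I * (s:ℂ)) ^ (-(1/2 : ℂ))
      = (1 + Complex.I * s) * (1 + Complex.I * s) ^ (-(3/2 : ℂ)) := by
    rw [show (-(1/2 : ℂ)) = 1 + (-(3/2 : ℂ)) by norm_num,
      Complex.cpow_add _ _ (one_add_ne s), Complex.cpow_one]
  have e1 : ((-(1/2 : ℂ)) - 1) = (-(3/2 : ℂ)) := by norm_num
  convert h3 using 1
  · rfl
  rw [e1, key]; ring

lemma fF_deriv_bound (s : ℝ) :
    ‖Complex.I/2 * Complex.exp (Complex.I * s / 2) * (Complex.I * s) *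
      (1 + Complex.I * s) ^ (-(3/2 : ℂ))‖ ≤ |s| / 2 := by
  have hc : ‖(1 + Complex.I * s) ^ (-(3/2 : ℂ))‖ ≤ 1 := by
    have := abs_cpow_le s (-(3/2)) (by norm_num)
    simpa using this
  have he : ‖Complex.exp (Complex.I * s / 2)‖ = 1 := by
    rw [Complex.norm_exp]; simp [Complex.div_re]
  calc ‖Complex.I/2 * Complex.exp (Complex.I * s / 2) * (Complex.I * s) *
        (1 + Complex.I * s) ^ (-(3/2 : ℂ))‖
      = (1/2) * 1 * |s| * ‖(1 + Complex.I * s) ^ (-(3/2 : ℂ))‖ := by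
        simp [map_mul, he]
    _ ≤ (1/2) * 1 * |s| * 1 := by
        gcongr
    _ = |s| / 2 := by ring

lemma fF_zero : fF 0 = 1 := by simp [fF]

lemma fF_sub_one_bound (t : ℝ) : ‖fF t - 1‖ ≤ t ^ 2 / 2 := by
  have h := Convex.norm_image_sub_le_of_norm_hasDerivWithin_le
    (f := fF) (f' := fun s => Complex.I/2 * Complex.exp (Complex.I * s / 2) * (Complex.I * s) *
      (1 + Complex.I * s) ^ (-(3/2 : ℂ))) (s := Set.uIcc 0 t) (C := |t|/2)
    (fun x _ => (fF_hasDerivAt x).hasDerivWithinAt)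
    (fun x hx => le_trans (fF_deriv_bound x) (by
      have : |x| ≤ |t| := by
        rcases Set.mem_uIcc.1 hx with h | h
        · rw [_root_.abs_of_nonneg h.1]; exact le_trans h.2 (le_abs_self t)
        · rw [_root_.abs_of_nonpos h.2]; exact le_trans (neg_le_neg h.1) (neg_le_abs t)
      linarith))
    (convex_uIcc 0 t) Set.left_mem_uIcc Set.right_mem_uIcc
  rw [fF_zero] at h
  calc ‖fF t - 1‖ ≤ |t|/2 * ‖(t:ℝ) - 0‖ := h
    _ = t^2/2 := by
        rw [sub_zero, Real.norm_eq_abs, div_mul_eq_mul_div, abs_mul_abs_self, sq]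

lemma fF_continuous : Continuous fF :=
  continuous_iff_continuousAt.2 fun s => (fF_hasDerivAt s).continuousAt

lemma fF_abs_le_one (t : ℝ) : ‖fF t‖ ≤ 1 := by
  have he : ‖Complex.exp (Complex.I * t / 2)‖ = 1 := by
    rw [Complex.norm_exp]; simp [Complex.div_re]
  have hc : ‖(1 + Complex.I * t) ^ (-(1/2 : ℂ))‖ ≤ 1 := by
    have := abs_cpow_le t (-(1/2)) (by norm_num)
    simpa using this
  calc ‖fF t‖ = ‖Complex.exp (Complex.I * t / 2)‖ *
        ‖(1 + Complex.I * t) ^ (-(1/2 : ℂ))‖ := by rw [fF, norm_mul]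
    _ ≤ 1 * 1 := by rw [he, one_mul, one_mul]; exact hc
    _ = 1 := one_mul 1

lemma Iint_eq (α : ℝ) :
    Iint α = ∫ t : ℝ, (Real.exp (-(α/4) * t^2) : ℂ) * fF t := by
  unfold Iint fF
  congr 1; funext t
  rw [Complex.exp_add, Complex.ofReal_exp]
  push_cast
  ring

lemma key_est {α : ℝ} (hα : 1 ≤ α) :
    ‖Iint α - (Real.sqrt (4 * Real.pi / α) : ℂ)‖ ≤
      4 / (α * Real.exp 1) * Real.sqrt (8 * Real.pi / α) := by
  have hα0 : (0:ℝ) < α := lt_of_lt_of_le one_pos hα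
  set b : ℝ := α / 4 with hbdef
  have hb : 0 < b := by positivity
  have hb2 : 0 < b / 2 := by positivity
  have int1 : Integrable (fun t : ℝ => (Real.exp (-b * t^2) : ℂ)) := by
    exact (integrable_exp_neg_mul_sq hb).ofReal
  have meas : AEStronglyMeasurable (fun t : ℝ => (Real.exp (-b * t^2) : ℂ) * fF t) volume := by
    exact ((Complex.continuous_ofReal.comp (Real.continuous_exp.comp
      (by continuity))).mul fF_continuous).aestronglyMeasurable
  have int2 : Integrable (fun t : ℝ => (Real.exp (-b * t^2) : ℂ) * fF t) := by
    refine Integrable.mono' (integrable_exp_neg_mul_sq hb) meas ?_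
    filter_upwards with t
    rw [norm_mul]
    calc ‖(Real.exp (-b * t^2) : ℂ)‖ * ‖fF t‖ ≤ ‖(Real.exp (-b * t^2) : ℂ)‖ * 1 := by
          gcongr; exact fF_abs_le_one t
      _ = Real.exp (-b * t^2) := by
          rw [mul_one, Complex.norm_real, Real.norm_eq_abs, abs_of_pos (Real.exp_pos _)]
  have hpib : Real.pi / b = 4 * Real.pi / α := by
    rw [hbdef]; field_simp
  have Gc : (∫ t : ℝ, (Real.exp (-b * t^2) : ℂ)) = (Real.sqrt (4 * Real.pi / α) : ℂ) := by
    rw [← hpib, ← integral_gaussian b]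
    exact integral_ofReal
  have hsplit : Iint α - (Real.sqrt (4 * Real.pi / α) : ℂ)
      = ∫ t : ℝ, ((Real.exp (-b * t^2) : ℂ) * fF t - (Real.exp (-b * t^2) : ℂ)) := by
    rw [integral_sub int2 int1, Iint_eq, Gc, ← hbdef]
  rw [hsplit]
  have intb : Integrable (fun t : ℝ => 1/(b * Real.exp 1) * Real.exp (-(b/2) * t^2)) :=
    (integrable_exp_neg_mul_sq hb2).const_mul _
  have hptw : ∀ t : ℝ, ‖(Real.exp (-b * t^2) : ℂ) * fF t - (Real.exp (-b * t^2) : ℂ)‖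
      ≤ 1/(b * Real.exp 1) * Real.exp (-(b/2) * t^2) := by
    intro t
    have h0 : (Real.exp (-b * t^2) : ℂ) * fF t - (Real.exp (-b * t^2) : ℂ)
        = (Real.exp (-b * t^2) : ℂ) * (fF t - 1) := by ring
    rw [h0, norm_mul, Complex.norm_real, Real.norm_eq_abs, abs_of_pos (Real.exp_pos _)]
    set x : ℝ := (b/2) * t^2 with hxdef
    have hx : 0 ≤ x := by positivity
    have hxe : x * Real.exp (-x) ≤ Real.exp (-1) := by
      have h := Real.add_one_le_exp (x - 1)
      calc x * Real.exp (-x) ≤ Real.exp (x - 1) * Real.exp (-x) := by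
            apply mul_le_mul_of_nonneg_right (by linarith) (Real.exp_nonneg _)
        _ = Real.exp (-1) := by rw [← Real.exp_add]; ring_nf
    have hsq : Real.exp (-b * t^2) = Real.exp (-x) * Real.exp (-x) := by
      rw [← Real.exp_add]; congr 1; rw [hxdef]; ring
    have hexp2 : Real.exp (-(b/2) * t^2) = Real.exp (-x) := by
      congr 1; rw [hxdef]; ring
    calc Real.exp (-b * t^2) * ‖fF t - 1‖ ≤ Real.exp (-b * t^2) * (t^2/2) := by
          apply mul_le_mul_of_nonneg_left (fF_sub_one_bound t) (Real.exp_nonneg _)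
      _ = Real.exp (-x) * (x * Real.exp (-x)) / b := by
          rw [hsq, hxdef]; field_simp
      _ ≤ Real.exp (-x) * Real.exp (-1) / b := by
          gcongr
      _ = 1/(b * Real.exp 1) * Real.exp (-(b/2) * t^2) := by
          rw [hexp2, Real.exp_neg 1]; field_simp
  calc ‖∫ t : ℝ, ((Real.exp (-b * t^2) : ℂ) * fF t - (Real.exp (-b * t^2) : ℂ))‖
      ≤ ∫ t : ℝ, 1/(b * Real.exp 1) * Real.exp (-(b/2) * t^2) :=
        norm_integral_le_of_norm_le intb (Filter.Eventually.of_forall hptw)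
    _ = 1/(b * Real.exp 1) * Real.sqrt (Real.pi / (b/2)) := by
        rw [integral_const_mul, integral_gaussian]
    _ = 4 / (α * Real.exp 1) * Real.sqrt (8 * Real.pi / α) := by
        have e1 : 1/(b * Real.exp 1) = 4/(α * Real.exp 1) := by
          rw [hbdef]; field_simp
        have e2 : Real.pi / (b/2) = 8 * Real.pi / α := by
          rw [hbdef]; field_simp; ring
        rw [e1, e2]

theorem Iint_asymptotic_infinity :
    ∃ C > (0 : ℝ), ∃ α₀ : ℝ, ∀ α : ℝ, α₀ ≤ α →
      ‖Iint α * (Real.sqrt (α / (4 * Real.pi)) : ℂ) - 1‖ ≤ C / α := by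
  refine ⟨3, by norm_num, 1, fun α hα => ?_⟩
  have hα0 : (0:ℝ) < α := lt_of_lt_of_le one_pos hα
  have hπ : (0:ℝ) < Real.pi := Real.pi_pos
  set s : ℝ := Real.sqrt (α / (4 * Real.pi)) with hsdef
  set s' : ℝ := Real.sqrt (4 * Real.pi / α) with hs'def
  have hs : s * s' = 1 := by
    rw [hsdef, hs'def, ← Real.sqrt_mul (by positivity)]
    rw [show α / (4 * Real.pi) * (4 * Real.pi / α) = 1 by field_simp]
    exact Real.sqrt_one
  have heq : Iint α * (s : ℂ) - 1 = (s : ℂ) * (Iint α - (s' : ℂ)) := by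
    rw [mul_sub, ← Complex.ofReal_mul, hs]
    push_cast
    ring
  have hprod : s * Real.sqrt (8 * Real.pi / α) = Real.sqrt 2 := by
    rw [hsdef, ← Real.sqrt_mul (by positivity)]
    congr 1
    field_simp
    ring
  have h2 : Real.sqrt 2 ≤ 1.5 := by
    nlinarith [Real.sq_sqrt (by norm_num : (0:ℝ) ≤ 2), Real.sqrt_nonneg 2]
  have he2 : (2:ℝ) ≤ Real.exp 1 := by
    have := Real.add_one_le_exp 1; linarith
  calc ‖Iint α * (s : ℂ) - 1‖
      = s * ‖Iint α - (s' : ℂ)‖ := by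
        rw [heq, norm_mul, Complex.norm_real, Real.norm_eq_abs,
          _root_.abs_of_nonneg (Real.sqrt_nonneg _)]
    _ ≤ s * (4 / (α * Real.exp 1) * Real.sqrt (8 * Real.pi / α)) := by
        apply mul_le_mul_of_nonneg_left (key_est hα) (Real.sqrt_nonneg _)
    _ = 4 / (α * Real.exp 1) * Real.sqrt 2 := by rw [← hprod]; ring
    _ ≤ 3 / α := by
        rw [div_mul_eq_mul_div, div_le_div_iff₀ (by positivity) hα0]
        nlinarith [Real.exp_pos 1]

end
end

section
/- I(α) > 0 for every α > 0 (in particular I(α) is real for α > 0). -/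
/-!
Statement 12: I(α) > 0 for every α > 0 (in particular I(α) is real for α > 0), where
I(α) = ∫_{-∞}^{∞} e^{-(α/4)t² + it/2} (1 + it)^{-1/2} dt (principal branch).
-/

noncomputable section

open MeasureTheory Real Set
open scoped Real

lemma integral_ofReal'' {f : ℝ → ℝ} : (∫ x : ℝ, ((f x : ℝ) : ℂ)) = ((∫ x : ℝ, f x : ℝ) : ℂ) :=
  integral_ofReal

lemma ofReal_mul_cpow {r : ℝ} (hr : 0 < r) {z : ℂ} (hz : z ≠ 0) (s : ℂ) :
    ((r : ℂ) * z) ^ s = (r : ℂ) ^ s * z ^ s := by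
  have hr' : (r : ℂ) ≠ 0 := Complex.ofReal_ne_zero.mpr hr.ne'
  rw [Complex.cpow_def_of_ne_zero (mul_ne_zero hr' hz), Complex.log_ofReal_mul hr hz,
    Complex.ofReal_log hr.le, add_mul, Complex.exp_add,
    ← Complex.cpow_def_of_ne_zero hr', ← Complex.cpow_def_of_ne_zero hz]

lemma one_add_I_mul_ne_zero (t : ℝ) : (1 + Complex.I * t) ≠ 0 := by
  intro h
  have := congrArg Complex.re h
  simp at this

lemma rep (t : ℝ) :
    (1 + Complex.I * t) ^ (-(1 / 2 : ℂ)) =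
      ((Real.pi : ℂ) ^ (1 / 2 : ℂ))⁻¹ * ∫ s : ℝ, Complex.exp (-(1 + Complex.I * t) * s ^ 2) := by
  have hz := one_add_I_mul_ne_zero t
  have harg : (1 + Complex.I * t).arg ≠ Real.pi := by
    simp [Complex.arg_eq_pi_iff]
  have hre : (-(1 + Complex.I * t)).re < 0 := by simp
  have hint := integral_cexp_quadratic hre 0 0
  simp only [zero_mul, add_zero, neg_neg, zero_sub, zero_pow, mul_zero, ne_eq,
    OfNat.ofNat_ne_zero, not_false_eq_true, zero_div, neg_zero, Complex.exp_zero, mul_one] at hint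
  rw [hint, div_eq_mul_inv (Real.pi : ℂ) (1 + Complex.I * t), ofReal_mul_cpow Real.pi_pos (inv_ne_zero hz),
    Complex.inv_cpow _ _ harg, ← Complex.cpow_neg]
  have hπ : ((Real.pi : ℂ) ^ (1 / 2 : ℂ)) ≠ 0 := by
    rw [Ne, Complex.cpow_eq_zero_iff]
    simp [Real.pi_ne_zero]
  rw [← mul_assoc, ← Complex.cpow_add _ _ (Complex.ofReal_ne_zero.mpr Real.pi_ne_zero),
    ← Complex.cpow_neg]
  norm_num

theorem Iint_pos : ∀ α : ℝ, 0 < α → (Iint α).im = 0 ∧ 0 < (Iint α).re := by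
  intro α hα
  set F : ℝ → ℝ → ℂ := fun t s =>
    Complex.exp (-(α / 4) * t ^ 2 + Complex.I * t / 2 + -(1 + Complex.I * t) * s ^ 2) with hF
  -- norm of F
  have hFnorm : ∀ t s : ℝ, ‖F t s‖ = Real.exp (-(α / 4) * t ^ 2) * Real.exp (-1 * s ^ 2) := by
    intro t s
    rw [hF]
    rw [Complex.norm_exp, ← Real.exp_add]
    congr 1
    simp [Complex.add_re, Complex.neg_re, Complex.mul_re, Complex.div_re, Complex.I_re,
      Complex.I_im, Complex.ofReal_re, Complex.ofReal_im, Complex.one_re, Complex.one_im,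
      Complex.normSq, pow_two]
  -- integrability on the product space
  have hFint : Integrable (Function.uncurry F) ((volume : Measure ℝ).prod volume) := by
    have hg : Integrable (fun p : ℝ × ℝ =>
        Real.exp (-(α / 4) * p.1 ^ 2) * Real.exp (-1 * p.2 ^ 2))
        ((volume : Measure ℝ).prod volume) :=
      Integrable.mul_prod (integrable_exp_neg_mul_sq (by positivity))
        (integrable_exp_neg_mul_sq one_pos)
    refine hg.mono' ?_ ?_
    · apply Continuous.aestronglyMeasurable
      apply Complex.continuous_exp.comp
      fun_prop
    · filter_upwards with p
      rw [Function.uncurry_apply_pair, hFnorm]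
  -- step 1 : Iint as a double integral
  have h1 : Iint α = ((Real.pi : ℂ) ^ (1 / 2 : ℂ))⁻¹ * ∫ t : ℝ, ∫ s : ℝ, F t s := by
    have key : ∀ t : ℝ,
        Complex.exp (-(α / 4) * t ^ 2 + Complex.I * t / 2) *
          (1 + Complex.I * t) ^ (-(1 / 2 : ℂ)) =
        ((Real.pi : ℂ) ^ (1 / 2 : ℂ))⁻¹ * ∫ s : ℝ, F t s := by
      intro t
      rw [rep t, ← mul_assoc, mul_comm (Complex.exp _) _, mul_assoc, ← integral_const_mul]
      congr 1
      congr 1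
      funext s
      rw [hF, ← Complex.exp_add]
    rw [Iint]
    simp_rw [key]
    rw [integral_const_mul]
  -- step 2 : swap
  have h2 : (∫ t : ℝ, ∫ s : ℝ, F t s) = ∫ s : ℝ, ∫ t : ℝ, F t s :=
    integral_integral_swap hFint
  -- step 3 : inner integral in t
  have h3 : ∀ s : ℝ, (∫ t : ℝ, F t s) =
      (((Real.pi / (α / 4)) ^ (1 / 2 : ℝ) : ℝ) : ℂ) *
        ((Real.exp (-s ^ 2 - (1 / 2 - s ^ 2) ^ 2 / α) : ℝ) : ℂ) := by
    intro s
    have hb : (-(α / 4 : ℂ)).re < 0 := by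
      have : (-(α / 4 : ℂ)).re = -(α / 4) := by simp
      rw [this]
      exact neg_lt_zero.mpr (by positivity)
    have hq := integral_cexp_quadratic hb (Complex.I * (1 / 2 - (s : ℂ) ^ 2)) (-(s : ℂ) ^ 2)
    have hfun : (fun t : ℝ => F t s) = fun t : ℝ =>
        Complex.exp (-(α / 4 : ℂ) * t ^ 2 + (Complex.I * (1 / 2 - (s : ℂ) ^ 2)) * t +
          (-(s : ℂ) ^ 2)) := by
      funext t
      simp only [hF]
      congr 1
      ring
    rw [hfun, hq]
    have hαne : (α : ℂ) ≠ 0 := Complex.ofReal_ne_zero.mpr hα.ne'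
    congr 1
    · rw [neg_neg, show ((Real.pi : ℂ) / ((α : ℂ) / 4)) = ((Real.pi / (α / 4) : ℝ) : ℂ) by
        push_cast; ring, Complex.ofReal_cpow (by positivity : (0:ℝ) ≤ Real.pi / (α / 4)) (1 / 2 : ℝ)]
      norm_num
    · have hexp : (-(s : ℂ) ^ 2 - (Complex.I * (1 / 2 - (s : ℂ) ^ 2)) ^ 2 / (4 * -((α : ℂ) / 4))) =
          ((-s ^ 2 - (1 / 2 - s ^ 2) ^ 2 / α : ℝ) : ℂ) := by
        rw [mul_pow, Complex.I_sq]
        push_cast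
        field_simp
      rw [hexp, ← Complex.ofReal_exp]
  -- the real integral J
  have hJint : Integrable (fun s : ℝ => Real.exp (-s ^ 2 - (1 / 2 - s ^ 2) ^ 2 / α)) := by
    refine (integrable_exp_neg_mul_sq one_pos).mono' ?_ ?_
    · exact (Real.continuous_exp.comp (by fun_prop)).aestronglyMeasurable
    · filter_upwards with s
      rw [Real.norm_eq_abs, abs_of_pos (Real.exp_pos _)]
      apply Real.exp_le_exp.mpr
      have h0 : 0 ≤ (1 / 2 - s ^ 2) ^ 2 / α := div_nonneg (sq_nonneg _) hα.le
      nlinarith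
  have hJpos : 0 < ∫ s : ℝ, Real.exp (-s ^ 2 - (1 / 2 - s ^ 2) ^ 2 / α) := by
    rw [integral_pos_iff_support_of_nonneg (fun s => (Real.exp_pos _).le) hJint]
    have hsupp : Function.support (fun s : ℝ => Real.exp (-s ^ 2 - (1 / 2 - s ^ 2) ^ 2 / α)) =
        Set.univ := Set.eq_univ_of_forall fun s => (Real.exp_pos _).ne'
    rw [hsupp]
    simp
  -- assemble
  have hIα : Iint α = (((Real.pi ^ (1 / 2 : ℝ))⁻¹ * ((Real.pi / (α / 4)) ^ (1 / 2 : ℝ) *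
      ∫ s : ℝ, Real.exp (-s ^ 2 - (1 / 2 - s ^ 2) ^ 2 / α)) : ℝ) : ℂ) := by
    rw [h1, h2]
    simp_rw [h3]
    rw [integral_const_mul, integral_ofReal'',
      show ((Real.pi : ℂ) ^ (1 / 2 : ℂ)) = ((Real.pi ^ (1 / 2 : ℝ) : ℝ) : ℂ) by
        rw [Complex.ofReal_cpow Real.pi_pos.le]; norm_num]
    push_cast
    ring
  rw [hIα]
  refine ⟨Complex.ofReal_im _, ?_⟩
  rw [Complex.ofReal_re]
  have hP : 0 < Real.pi ^ (1 / 2 : ℝ) := Real.rpow_pos_of_pos Real.pi_pos _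
  have hK : 0 < (Real.pi / (α / 4)) ^ (1 / 2 : ℝ) := Real.rpow_pos_of_pos (by positivity) _
  positivity

end
end
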